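/- For any positive integers m, T and any γ ∈ (0, 1/8], there exists a dataset of m points x_1,…,x_m in ℝ² with max_i ‖x_i‖ ≤ 1 that is separable with margin γ (there is a unit vector w₀ with min_i x_iᵀw₀ ≥ γ), such that for any step size 0 < η ≤ 1, gradient descent on the logistic empirical risk, started at the origin (w_1 = 0, w_{t+1} = w_t − η∇L̂(w_t)), satisfies x_iᵀw_T ≤ 0 for at least ⌊m/(26·max{1, γ²T})⌋ of the data points x_i. -/

import Mathlib

open scoped RealInnerProductSpace

noncomputable def lsig (z : ℝ) : ℝ := 1 / (1 + Real.exp z)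

lemma lsig_pos (z : ℝ) : 0 < lsig z := by unfold lsig; positivity

lemma lsig_le_one (z : ℝ) : lsig z ≤ 1 := by
  unfold lsig
  rw [div_le_one (by positivity)]
  nlinarith [Real.exp_pos z]

lemma lsig_anti {z L : ℝ} (h : z ≤ L) : lsig L ≤ lsig z := by
  have := Real.exp_le_exp.mpr h
  have := Real.exp_pos z
  unfold lsig
  rw [div_le_div_iff₀ (by positivity) (by positivity)]
  nlinarith

section GradAux

variable {F : Type*} [NormedAddCommGroup F] [InnerProductSpace ℝ F] [CompleteSpace F]

lemma hasGradientAt_logistic (n : ℕ) (x : Fin n → F) (L : F → ℝ)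
    (hL : ∀ v, L v = (1 / n) * ∑ i, Real.log (1 + Real.exp (-⟪x i, v⟫))) (w : F) :
    HasGradientAt L ((1 / n : ℝ) • ∑ i, (-(lsig ⟪x i, w⟫)) • x i) w := by
  have hfun : L = fun v => (1 / n : ℝ) * ∑ i, Real.log (1 + Real.exp (-⟪x i, v⟫)) := funext hL
  have hterm : ∀ i : Fin n, HasFDerivAt (fun v => Real.log (1 + Real.exp (-⟪x i, v⟫)))
      ((-(lsig ⟪x i, w⟫)) • (innerSL ℝ (x i))) w := by
    intro i
    have h1 : HasFDerivAt (fun v : F => ⟪x i, v⟫) (innerSL ℝ (x i)) w :=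
      (innerSL ℝ (x i)).hasFDerivAt
    set z := ⟪x i, w⟫ with hz
    have h2 : HasDerivAt (fun z : ℝ => Real.log (1 + Real.exp (-z))) (-(lsig z)) z := by
      have e1 : HasDerivAt (fun z : ℝ => -z) (-1) z := (hasDerivAt_id z).neg
      have e2 : HasDerivAt (fun z : ℝ => Real.exp (-z)) (Real.exp (-z) * (-1)) z :=
        (Real.hasDerivAt_exp (-z)).comp z e1
      have e3 : HasDerivAt (fun z : ℝ => 1 + Real.exp (-z)) (Real.exp (-z) * (-1)) z :=
        e2.const_add 1
      have hpos : (0:ℝ) < 1 + Real.exp (-z) := by positivity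
      have e4 := e3.log (ne_of_gt hpos)
      convert e4 using 1
      unfold lsig
      rw [Real.exp_neg]
      have h5 := Real.exp_pos z
      field_simp
      ring
    exact h2.comp_hasFDerivAt w h1
  have hfd : HasFDerivAt L ((1 / n : ℝ) • ∑ i, (-(lsig ⟪x i, w⟫)) • (innerSL ℝ (x i))) w := by
    rw [hfun]
    exact (HasFDerivAt.fun_sum (fun i _ => hterm i)).const_mul ((1:ℝ)/n)
  rw [hasGradientAt_iff_hasFDerivAt]
  convert hfd using 1
  ext y
  simp [inner_smul_left, inner_smul_right, sum_inner, real_inner_smul_left,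
    InnerProductSpace.toDual_apply_apply]
  ext y
  simp [inner_smul_left, inner_smul_right, sum_inner, real_inner_smul_left,
    InnerProductSpace.toDual_apply_apply]

end GradAux

noncomputable def vec2 (u v : ℝ) : EuclideanSpace ℝ (Fin 2) :=
  (WithLp.equiv 2 (Fin 2 → ℝ)).symm ![u, v]

lemma vec2_inner (u v u' v' : ℝ) : ⟪vec2 u v, vec2 u' v'⟫ = u * u' + v * v' := by
  simp [vec2, PiLp.inner_apply, Fin.sum_univ_two, RCLike.inner_apply]; ring

lemma vec2_norm_sq (u v : ℝ) : ‖vec2 u v‖ ^ 2 = u ^ 2 + v ^ 2 := by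
  rw [← real_inner_self_eq_norm_sq, vec2_inner]; ring

lemma card_filter_lt (m k : ℕ) (hkm : k ≤ m) :
    (Finset.univ.filter fun i : Fin m => (i : ℕ) < k).card = k := by
  have h : (Finset.univ.filter fun i : Fin m => (i : ℕ) < k)
      = Finset.map (Fin.castLEEmb hkm) Finset.univ := by
    ext i
    simp only [Finset.mem_filter, Finset.mem_univ, true_and, Finset.mem_map]
    constructor
    · intro hi
      refine ⟨⟨i, hi⟩, ?_⟩
      ext
      simp [Fin.castLEEmb, Fin.castLE]
    · rintro ⟨j, rfl⟩
      simpa [Fin.castLEEmb, Fin.castLE] using j.isLt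
  rw [h, Finset.card_map, Finset.card_univ, Fintype.card_fin]

set_option maxHeartbeats 1600000 in
lemma key_scalar (e A K c : ℝ) (he : 0 < e) (heK : e * K ≤ 1 / 26)
    (hc : 31 / 32 ≤ c) (hc1 : c ≤ 1) (hK : 1 ≤ K) (hA : 25 * K ≤ A)
    (p q : ℕ → ℝ) (hp1 : p 1 = 0) (hq1 : q 1 = 0)
    (hq : ∀ t, 1 ≤ t → q (t + 1) = q t + e * (A * lsig (q t) - c * (K * lsig (p t))))
    (hp : ∀ t, 1 ≤ t → p (t + 1) = p t + e * (K * lsig (p t) - c * (A * lsig (q t))))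
    (T : ℕ) (hT : 1 ≤ T)
    (hbudget : (1 - c ^ 2) * (e * K * ((T : ℝ) - 1)) ≤ 4 / 26) :
    p T ≤ 0 := by
  have hK0 : (0:ℝ) < K := by linarith
  have hA0 : (0:ℝ) < A := by linarith
  have hc0 : (0:ℝ) < c := by linarith
  have hc2 : (0:ℝ) ≤ 1 - c ^ 2 := by nlinarith
  -- claim 1 : p t + c * q t ≤ e*K*(1-c^2)*(t-1)
  have claim1 : ∀ t, 1 ≤ t → p t + c * q t ≤ e * K * (1 - c ^ 2) * ((t : ℝ) - 1) := by
    intro t ht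
    induction t, ht using Nat.le_induction with
    | base => simp [hp1, hq1]
    | succ t ht IH =>
      have h1 := hp t ht
      have h2 := hq t ht
      have h3 := lsig_le_one (p t)
      have h4 := lsig_pos (p t)
      have hek : 0 ≤ e * K * (1 - c ^ 2) := by positivity
      push_cast
      nlinarith [mul_le_mul_of_nonneg_left h3 hek]
  -- claim 2 : lower bound on q
  obtain ⟨L0, hL0def⟩ : ∃ L0 : ℝ, L0 = Real.log (A / (2 * K)) := ⟨_, rfl⟩
  obtain ⟨δ, hδdef⟩ : ∃ δ : ℝ, δ = e * K * (23 / 27) := ⟨_, rfl⟩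
  have hδ0 : 0 < δ := by rw [hδdef]; positivity
  have hL0 : Real.log 2 ≤ L0 := by
    rw [hL0def]
    apply Real.log_le_log (by norm_num)
    rw [le_div_iff₀ (by positivity)]
    linarith
  have hlog2 : (0.6931 : ℝ) ≤ Real.log 2 := by
    have := Real.log_two_gt_d9
    linarith
  have claim2 : ∀ t : ℕ, 1 ≤ t → min (((t : ℝ) - 1) * δ) (L0 - e * K) ≤ q t := by
    intro t ht
    induction t, ht using Nat.le_induction with
    | base =>
      rw [hq1]
      push_cast
      exact le_trans (min_le_left _ _) (by norm_num)
    | succ t ht IH =>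
      by_cases hcase : q t ≤ L0
      · -- q increases by at least δ
        have hsq : 2 * K / (2 * K + A) ≤ lsig (q t) := by
          have h1 : lsig L0 ≤ lsig (q t) := lsig_anti hcase
          have h2 : lsig L0 = 2 * K / (2 * K + A) := by
            rw [hL0def]
            unfold lsig
            rw [Real.exp_log (by positivity)]
            field_simp
          linarith [h2 ▸ h1]
        have hsq' : 2 * K ≤ lsig (q t) * (2 * K + A) := by
          rw [div_le_iff₀ (by positivity)] at hsq
          linarith
        have hstep : q t + δ ≤ q (t + 1) := by
          rw [hq t ht]
          have h3 : c * (K * lsig (p t)) ≤ K := by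
            nlinarith [mul_le_mul_of_nonneg_left (lsig_le_one (p t)) hK0.le,
              mul_le_mul_of_nonneg_right hc1 (mul_nonneg hK0.le (lsig_pos (p t)).le)]
          have h4 : (50 / 27) * K ≤ A * lsig (q t) := by
            nlinarith [lsig_pos (q t), mul_le_mul_of_nonneg_left hsq' hA0.le]
          rw [hδdef]
          nlinarith
        rcases min_cases (((t:ℝ) - 1) * δ) (L0 - e * K) with ⟨hmin, hside⟩ | ⟨hmin, hside⟩
        · rw [hmin] at IH
          push_cast
          have h9 : min (((t:ℝ) + 1 - 1) * δ) (L0 - e * K) ≤ ((t:ℝ) - 1) * δ + δ := by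
            refine le_trans (min_le_left _ _) (by nlinarith)
          linarith
        · rw [hmin] at IH
          have h9 : min (((t:ℝ) + 1 - 1) * δ) (L0 - e * K) ≤ (L0 - e * K) + δ := by
            refine le_trans (min_le_right _ _) (by linarith)
          push_cast
          linarith
      · -- q stays above L0 - e*K
        push_neg at hcase
        have hstep : q t - e * K ≤ q (t + 1) := by
          rw [hq t ht]
          have h3 : c * (K * lsig (p t)) ≤ K := by
            nlinarith [mul_le_mul_of_nonneg_left (lsig_le_one (p t)) hK0.le,
              mul_le_mul_of_nonneg_right hc1 (mul_nonneg hK0.le (lsig_pos (p t)).le)]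
          nlinarith [lsig_pos (q t), mul_pos hA0 (lsig_pos (q t))]
        have : min (((t:ℝ) + 1 - 1) * δ) (L0 - e * K) ≤ L0 - e * K := min_le_right _ _
        push_cast
        linarith
  -- combine
  have h1 := claim1 T hT
  have h2 := claim2 T hT
  have hT1 : (1:ℝ) ≤ (T:ℝ) := by exact_mod_cast hT
  have h5 : 0 ≤ e * K * ((T:ℝ) - 1) :=
    mul_nonneg (mul_nonneg he.le hK0.le) (by linarith)
  rcases min_cases (((T : ℝ) - 1) * δ) (L0 - e * K) with ⟨hmin, hside⟩ | ⟨hmin, hside⟩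
  · rw [hmin, hδdef] at h2
    -- p T ≤ eK(1-c²)(T-1) - c(T-1)δ ≤ 0
    have hkey : (1 - c ^ 2) ≤ c * (23 / 27) := by nlinarith
    have hB := mul_le_mul_of_nonneg_right hkey h5
    have hA1 := mul_le_mul_of_nonneg_left h2 hc0.le
    linarith [h1, hA1, hB]
  · rw [hmin] at h2
    -- p T ≤ 4/26 - c(L0 - eK) ≤ 0
    have h6 : (0.6931 : ℝ) - 1 / 26 ≤ L0 - e * K := by linarith
    have h7 : c * (0.6931 - 1 / 26) ≤ c * (L0 - e * K) :=
      mul_le_mul_of_nonneg_left h6 hc0.le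
    have h8 := mul_le_mul_of_nonneg_left h2 hc0.le
    linarith [h1, hbudget, h7, h8]

set_option maxHeartbeats 1600000 in
/-- Theorem 8 of the paper: tightness. For any positive
integers `m, T` and any `γ ∈ (0, 1/8]`, there exists a dataset of `m` points in
`ℝ²`, contained in the unit ball and separable with margin `γ`, such that for
any step size `0 < η ≤ 1`, gradient descent on the logistic empirical risk
started at the origin satisfies `xᵢᵀw_T ≤ 0` for at least
`⌊m/(26·max{1, γ²T})⌋` of the data points. -/
theorem stmt_14 (m T : ℕ) (hm : 0 < m) (hT : 0 < T)
    (γ : ℝ) (hγ : γ ∈ Set.Ioc (0 : ℝ) (1 / 8)) :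
    ∃ x : Fin m → EuclideanSpace ℝ (Fin 2),
      (∀ i, ‖x i‖ ≤ 1) ∧
      (∃ w₀ : EuclideanSpace ℝ (Fin 2), ‖w₀‖ = 1 ∧ ∀ i, γ ≤ ⟪x i, w₀⟫) ∧
      ∀ η : ℝ, 0 < η → η ≤ 1 →
      ∀ L : EuclideanSpace ℝ (Fin 2) → ℝ,
        (∀ v, L v = (1 / m) * ∑ i, Real.log (1 + Real.exp (-⟪x i, v⟫))) →
      ∀ w : ℕ → EuclideanSpace ℝ (Fin 2), w 1 = 0 →
        (∀ t, 1 ≤ t → w (t + 1) = w t - η • gradient L (w t)) →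
      ∃ S : Finset (Fin m),
        ⌊(m : ℝ) / (26 * max 1 (γ ^ 2 * T))⌋ ≤ (S.card : ℤ) ∧
        ∀ i ∈ S, ⟪x i, w T⟫ ≤ 0 := by
  obtain ⟨hγ0, hγ8⟩ := hγ
  have hγ2 : γ ^ 2 ≤ 1 / 64 := by nlinarith
  obtain ⟨α, hαdef⟩ : ∃ α : ℝ, α = Real.sqrt (1 - γ ^ 2) := ⟨_, rfl⟩
  have hα2 : α ^ 2 = 1 - γ ^ 2 := by
    rw [hαdef]; exact Real.sq_sqrt (by nlinarith)
  have hα0 : 0 ≤ α := by rw [hαdef]; positivity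
  obtain ⟨a, hadef⟩ : ∃ a : EuclideanSpace ℝ (Fin 2), a = vec2 γ α := ⟨_, rfl⟩
  obtain ⟨b, hbdef⟩ : ∃ b : EuclideanSpace ℝ (Fin 2), b = vec2 γ (-α) := ⟨_, rfl⟩
  have haa : ⟪a, a⟫ = 1 := by rw [hadef, vec2_inner]; linear_combination hα2
  have hbb : ⟪b, b⟫ = 1 := by rw [hbdef, vec2_inner]; linear_combination hα2
  have hab : ⟪a, b⟫ = -(1 - 2 * γ ^ 2) := by
    rw [hadef, hbdef, vec2_inner]; linear_combination (-1 : ℝ) * hα2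
  have hba : ⟪b, a⟫ = -(1 - 2 * γ ^ 2) := by
    rw [hadef, hbdef, vec2_inner]; linear_combination (-1 : ℝ) * hα2
  have hna : ‖a‖ ≤ 1 := by
    have h1 : ‖a‖ ^ 2 = 1 := by rw [hadef, vec2_norm_sq]; linear_combination hα2
    nlinarith [norm_nonneg a]
  have hnb : ‖b‖ ≤ 1 := by
    have h1 : ‖b‖ ^ 2 = 1 := by rw [hbdef, vec2_norm_sq]; linear_combination hα2
    nlinarith [norm_nonneg b]
  -- the count k
  obtain ⟨k, hkdef⟩ : ∃ k : ℕ, k = (⌊(m : ℝ) / (26 * max 1 (γ ^ 2 * (T:ℝ)))⌋).toNat := ⟨_, rfl⟩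
  have hm0 : (0 : ℝ) < m := by exact_mod_cast hm
  have hT1 : (1 : ℝ) ≤ (T : ℝ) := by exact_mod_cast hT
  have hM1 : (1 : ℝ) ≤ max 1 (γ ^ 2 * T) := le_max_left _ _
  have hMd : (0 : ℝ) < 26 * max 1 (γ ^ 2 * T) := by linarith
  have hr0 : 0 ≤ (m : ℝ) / (26 * max 1 (γ ^ 2 * T)) := by positivity
  have hkr : (k : ℝ) ≤ (m : ℝ) / (26 * max 1 (γ ^ 2 * T)) := by
    have hfl : (0:ℤ) ≤ ⌊(m : ℝ) / (26 * max 1 (γ ^ 2 * (T:ℝ)))⌋ := Int.floor_nonneg.mpr hr0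
    have h2 : ((k:ℕ):ℝ) = ((⌊(m : ℝ) / (26 * max 1 (γ ^ 2 * (T:ℝ)))⌋ : ℤ) : ℝ) := by
      rw [hkdef]; exact_mod_cast congrArg (fun z : ℤ => (z : ℝ)) (Int.toNat_of_nonneg hfl)
    rw [h2]; exact Int.floor_le _
  have hkM : (k : ℝ) * (26 * max 1 (γ ^ 2 * T)) ≤ m := by
    rw [← le_div_iff₀ hMd]; exact hkr
  have hk0' : (0 : ℝ) ≤ (k : ℝ) := Nat.cast_nonneg k
  have hk26 : 26 * (k : ℝ) ≤ m := by nlinarith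
  have hkγ : 26 * ((k : ℝ) * (γ ^ 2 * T)) ≤ m := by
    have h1 : γ ^ 2 * T ≤ max 1 (γ ^ 2 * T) := le_max_right _ _
    nlinarith
  have hkm : k ≤ m := by
    have : (k : ℝ) ≤ (m : ℝ) := by nlinarith
    exact_mod_cast this
  -- the dataset
  obtain ⟨x, hxdef⟩ : ∃ x : Fin m → EuclideanSpace ℝ (Fin 2),
      x = fun i : Fin m => if (i : ℕ) < k then b else a := ⟨_, rfl⟩
  have hxb : ∀ i : Fin m, (i : ℕ) < k → x i = b := by
    intro i h; rw [hxdef]; simp [h]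
  have hxa : ∀ i : Fin m, ¬ (i : ℕ) < k → x i = a := by
    intro i h; rw [hxdef]; simp [h]
  refine ⟨x, ?_, ?_, ?_⟩
  · intro i
    by_cases h : (i : ℕ) < k
    · rw [hxb i h]; exact hnb
    · rw [hxa i h]; exact hna
  · refine ⟨vec2 1 0, ?_, ?_⟩
    · have h1 : ‖vec2 1 0‖ ^ 2 = 1 := by rw [vec2_norm_sq]; ring
      nlinarith [norm_nonneg (vec2 1 0)]
    · intro i
      by_cases h : (i : ℕ) < k
      · rw [hxb i h, hbdef, vec2_inner]; linarith
      · rw [hxa i h, hadef, vec2_inner]; linarith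
  intro η hη0 hη1 L hL w hw1 hrec
  by_cases hk0 : k = 0
  · refine ⟨∅, ?_, by simp⟩
    simp only [Finset.card_empty, Nat.cast_zero]
    rw [hkdef] at hk0
    exact Int.toNat_eq_zero.mp hk0
  have hk1 : 1 ≤ k := Nat.one_le_iff_ne_zero.mpr hk0
  have hK1 : (1 : ℝ) ≤ (k : ℝ) := by exact_mod_cast hk1
  -- gradient formula
  have hgrad : ∀ v, gradient L v = ((1 : ℝ) / m) • ∑ i, (-(lsig ⟪x i, v⟫)) • x i :=
    fun v => (hasGradientAt_logistic m x L hL v).gradient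
  have hcard : (Finset.univ.filter fun i : Fin m => (i : ℕ) < k).card = k :=
    card_filter_lt m k hkm
  have hcard' : (Finset.univ.filter fun i : Fin m => ¬ (i : ℕ) < k).card = m - k := by
    have h1 := Finset.card_filter_add_card_filter_not (s := (Finset.univ : Finset (Fin m)))
      (p := fun i : Fin m => (i : ℕ) < k)
    rw [hcard, Finset.card_univ, Fintype.card_fin] at h1
    omega
  have hsum : ∀ (v u : EuclideanSpace ℝ (Fin 2)), ⟪u, gradient L v⟫ =
      (1 / (m : ℝ)) * ((k : ℝ) * (-(lsig ⟪b, v⟫) * ⟪u, b⟫)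
        + ((m - k : ℕ) : ℝ) * (-(lsig ⟪a, v⟫) * ⟪u, a⟫)) := by
    intro v u
    rw [hgrad v, real_inner_smul_right, inner_sum]
    have hterm : ∀ i : Fin m, ⟪u, (-(lsig ⟪x i, v⟫)) • x i⟫ =
        if (i : ℕ) < k then -(lsig ⟪b, v⟫) * ⟪u, b⟫ else -(lsig ⟪a, v⟫) * ⟪u, a⟫ := by
      intro i
      by_cases h : (i : ℕ) < k
      · rw [hxb i h, if_pos h, real_inner_smul_right]
      · rw [hxa i h, if_neg h, real_inner_smul_right]
    rw [Finset.sum_congr rfl (fun i _ => hterm i), Finset.sum_ite,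
      Finset.sum_const, Finset.sum_const, hcard, hcard']
    simp only [nsmul_eq_mul]
  -- the scalar sequences
  set c : ℝ := 1 - 2 * γ ^ 2 with hcdef
  have hrecq : ∀ t, 1 ≤ t → ⟪a, w (t + 1)⟫ = ⟪a, w t⟫ +
      (η / m) * (((m - k : ℕ) : ℝ) * lsig ⟪a, w t⟫ - c * ((k : ℝ) * lsig ⟪b, w t⟫)) := by
    intro t ht
    rw [hrec t ht, inner_sub_right, real_inner_smul_right, hsum (w t) a, haa, hab]
    ring
  have hrecp : ∀ t, 1 ≤ t → ⟪b, w (t + 1)⟫ = ⟪b, w t⟫ +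
      (η / m) * (((k : ℝ)) * lsig ⟪b, w t⟫ - c * (((m - k : ℕ) : ℝ) * lsig ⟪a, w t⟫)) := by
    intro t ht
    rw [hrec t ht, inner_sub_right, real_inner_smul_right, hsum (w t) b, hbb, hba]
    ring
  have hmk : ((m - k : ℕ) : ℝ) = (m : ℝ) - (k : ℝ) := by
    push_cast [Nat.cast_sub hkm]; ring
  have hpT : ⟪b, w T⟫ ≤ 0 := by
    apply key_scalar (η / m) (((m - k : ℕ) : ℝ)) ((k : ℝ)) c (by positivity)
      ?_ (by rw [hcdef]; nlinarith) (by rw [hcdef]; nlinarith)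
      hK1 (by rw [hmk]; linarith)
      (fun t => ⟪b, w t⟫) (fun t => ⟪a, w t⟫)
      (by show (⟪b, w 1⟫ : ℝ) = 0; rw [hw1, inner_zero_right])
      (by show (⟪a, w 1⟫ : ℝ) = 0; rw [hw1, inner_zero_right])
      hrecq hrecp T hT ?_
    · -- step size bound : (η/m) * k ≤ 1/26
      rw [div_mul_eq_mul_div, div_le_iff₀ hm0]
      nlinarith
    · -- budget
      have b1 : η * ((k : ℝ) * ((T : ℝ) - 1)) ≤ (k : ℝ) * (T : ℝ) := by
        nlinarith [mul_nonneg hk0' (by linarith : (0:ℝ) ≤ (T:ℝ) - 1)]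
      have b2 : γ ^ 2 * (η * ((k : ℝ) * ((T : ℝ) - 1))) ≤ γ ^ 2 * ((k : ℝ) * (T : ℝ)) :=
        mul_le_mul_of_nonneg_left b1 (sq_nonneg γ)
      have c1 : 0 ≤ γ ^ 2 * (η * ((k : ℝ) * ((T : ℝ) - 1))) := by
        have := mul_nonneg hk0' (by linarith : (0:ℝ) ≤ (T:ℝ) - 1)
        positivity
      have c2 : (1 - γ ^ 2) * (γ ^ 2 * (η * ((k : ℝ) * ((T : ℝ) - 1))))
          ≤ γ ^ 2 * (η * ((k : ℝ) * ((T : ℝ) - 1))) := by nlinarith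
      have h9 : (1 - c ^ 2) * (η * (k : ℝ) * ((T : ℝ) - 1)) ≤ (4 / 26) * (m:ℝ) := by
        rw [hcdef]; nlinarith [b2, hkγ, c2]
      calc (1 - c ^ 2) * (η / (m:ℝ) * (k : ℝ) * ((T : ℝ) - 1))
          = ((1 - c ^ 2) * (η * (k : ℝ) * ((T : ℝ) - 1))) / (m:ℝ) := by ring
        _ ≤ ((4 / 26) * (m:ℝ)) / (m:ℝ) := by gcongr
        _ = 4 / 26 := by field_simp
  -- conclusion
  refine ⟨Finset.univ.filter fun i : Fin m => (i : ℕ) < k, ?_, ?_⟩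
  · rw [hcard, hkdef]
    exact_mod_cast Int.self_le_toNat _
  · intro i hi
    rw [Finset.mem_filter] at hi
    rw [hxb i hi.2]
    exact hpT
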